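/- In the signed edge-matching instance built from a directed graph G with unique source s and unique sink t (one vertex tile per vertex, one edge tile per edge, one bridge tile, as specified), if all tiles can be placed in a 1 × n row with every adjacent pair compatible, then G has a Hamiltonian path from s to t. -/

import Mathlib

/-- Colors used by the reduction: entering/leaving colors `I v`, `O v` per vertex,
an unmatchable color `U v` per vertex, a global garbage color `X`, and the bridge's
unmatchable color `UB`. -/
inductive Col (V : Type) where
  | I : V → Col V
  | O : V → Col V
  | U : V → Col V
  | X : Col V
  | UB : Col V

/-- A signed square tile: each side carries a color and a sign (`true` = `+`). -/
structure STile (V : Type) where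
  left : Col V × Bool
  top : Col V × Bool
  right : Col V × Bool
  bottom : Col V × Bool

/-- Rotation of a tile by 90 degrees. -/
def rotCW {V : Type} (T : STile V) : STile V :=
  ⟨T.bottom, T.left, T.top, T.right⟩

/-- Vertex tile `T(+I_v, +U_v, +O_v, +U_v)`. -/
def vertexTile {V : Type} (v : V) : STile V :=
  ⟨(.I v, true), (.U v, true), (.O v, true), (.U v, true)⟩

/-- Edge tile `T(-O_u, +X, -I_v, -X)` for an edge `(u, v)`. -/
def edgeTile {V : Type} (u v : V) : STile V :=
  ⟨(.O u, false), (.X, true), (.I v, false), (.X, false)⟩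

/-- Bridge tile `T(-O_t, +U_B, -X, +U_B)`. -/
def bridgeTile {V : Type} (t : V) : STile V :=
  ⟨(.O t, false), (.UB, true), (.X, false), (.UB, true)⟩

/-- Two horizontally adjacent tiles are compatible if the shared edge has the same
color and opposite signs. -/
def compatible {V : Type} (a b : STile V) : Prop :=
  a.right.1 = b.left.1 ∧ a.right.2 = !b.left.2

/-- The tile (in canonical orientation) associated to each tile identifier:
one vertex tile per vertex, one edge tile per edge, and one bridge tile. -/
def baseTile {V : Type} (E : Finset (V × V)) (t : V) :
    V ⊕ {e : V × V // e ∈ E} ⊕ Unit → STile V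
  | .inl v => vertexTile v
  | .inr (.inl e) => edgeTile e.1.1 e.1.2
  | .inr (.inr _) => bridgeTile t


namespace S15
lemma rot4 {V : Type} (T : STile V) : rotCW^[4] T = T := rfl
lemma rot_mod {V : Type} (m : ℕ) (T : STile V) : rotCW^[m] T = rotCW^[m % 4] T := by
  conv_lhs => rw [← Nat.div_add_mod m 4, Nat.add_comm]
  rw [Function.iterate_add_apply]
  congr 1
  rw [Function.iterate_mul]
  induction (m / 4) with
  | zero => rfl
  | succ k ih => rw [Function.iterate_succ_apply, rot4, ih]

variable {V : Type} {E : Finset (V × V)} {n : ℕ}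

def Tl (t : V) (σ : Fin n ≃ (V ⊕ {e : V × V // e ∈ E} ⊕ Unit)) (rot : Fin n → ℕ)
    (i : Fin n) : STile V := rotCW^[rot i] (baseTile E t (σ i))

lemma Tl_eq (t : V) (σ : Fin n ≃ (V ⊕ {e : V × V // e ∈ E} ⊕ Unit)) (rot : Fin n → ℕ)
    (i : Fin n) : Tl t σ rot i = rotCW^[rot i % 4] (baseTile E t (σ i)) := by
  rw [Tl, rot_mod]

lemma master (t : V) (σ : Fin n ≃ (V ⊕ {e : V × V // e ∈ E} ⊕ Unit)) (rot : Fin n → ℕ)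
    (k : ℕ) (hk : k < n) :
    (∃ v, σ ⟨k, hk⟩ = Sum.inl v ∧
      (((Tl t σ rot ⟨k, hk⟩).left = (Col.I v, true) ∧ (Tl t σ rot ⟨k, hk⟩).right = (Col.O v, true)) ∨
       ((Tl t σ rot ⟨k, hk⟩).left = (Col.O v, true) ∧ (Tl t σ rot ⟨k, hk⟩).right = (Col.I v, true)) ∨
       ((Tl t σ rot ⟨k, hk⟩).left = (Col.U v, true) ∧ (Tl t σ rot ⟨k, hk⟩).right = (Col.U v, true)))) ∨
    (∃ e : {e : V × V // e ∈ E}, σ ⟨k, hk⟩ = Sum.inr (Sum.inl e) ∧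
      (((Tl t σ rot ⟨k, hk⟩).left = (Col.O e.1.1, false) ∧ (Tl t σ rot ⟨k, hk⟩).right = (Col.I e.1.2, false)) ∨
       ((Tl t σ rot ⟨k, hk⟩).left = (Col.I e.1.2, false) ∧ (Tl t σ rot ⟨k, hk⟩).right = (Col.O e.1.1, false)) ∨
       ((Tl t σ rot ⟨k, hk⟩).left = (Col.X, false) ∧ (Tl t σ rot ⟨k, hk⟩).right = (Col.X, true)) ∨
       ((Tl t σ rot ⟨k, hk⟩).left = (Col.X, true) ∧ (Tl t σ rot ⟨k, hk⟩).right = (Col.X, false)))) ∨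
    (σ ⟨k, hk⟩ = Sum.inr (Sum.inr ()) ∧
      (((Tl t σ rot ⟨k, hk⟩).left = (Col.O t, false) ∧ (Tl t σ rot ⟨k, hk⟩).right = (Col.X, false)) ∨
       ((Tl t σ rot ⟨k, hk⟩).left = (Col.X, false) ∧ (Tl t σ rot ⟨k, hk⟩).right = (Col.O t, false)) ∨
       ((Tl t σ rot ⟨k, hk⟩).left = (Col.UB, true) ∧ (Tl t σ rot ⟨k, hk⟩).right = (Col.UB, true)))) := by
  have hr : rot ⟨k, hk⟩ % 4 = 0 ∨ rot ⟨k, hk⟩ % 4 = 1 ∨ rot ⟨k, hk⟩ % 4 = 2 ∨ rot ⟨k, hk⟩ % 4 = 3 := by omega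
  rcases h : σ ⟨k, hk⟩ with v | e | ⟨⟩ <;>
    rw [Tl_eq, h] <;>
    rcases hr with hr | hr | hr | hr <;>
    rw [hr] <;>
    simp [baseTile, vertexTile, edgeTile, bridgeTile, rotCW, Function.iterate_succ_apply']
variable {t : V} {σ : Fin n ≃ (V ⊕ {e : V × V // e ∈ E} ⊕ Unit)} {rot : Fin n → ℕ}

lemma iface (hc : ∀ i j : Fin n, (j : ℕ) = (i : ℕ) + 1 →
      compatible (Tl t σ rot i) (Tl t σ rot j))
    {a b : ℕ} (ha : a < n) (hb : b < n) (hab : b = a + 1) :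
    (Tl t σ rot ⟨b, hb⟩).left =
      ((Tl t σ rot ⟨a, ha⟩).right.1, !(Tl t σ rot ⟨a, ha⟩).right.2) := by
  subst hab
  obtain ⟨h1, h2⟩ := hc ⟨a, ha⟩ ⟨a + 1, hb⟩ rfl
  rw [Prod.ext_iff]
  exact ⟨h1.symm, by rw [h2, Bool.not_not]⟩

lemma left_I {k : ℕ} (hk : k < n) {v : V}
    (h : (Tl t σ rot ⟨k, hk⟩).left = (Col.I v, true)) :
    σ ⟨k, hk⟩ = Sum.inl v ∧ (Tl t σ rot ⟨k, hk⟩).right = (Col.O v, true) := by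
  rcases master t σ rot k hk with ⟨w, hw, ⟨hl, hr⟩ | ⟨hl, hr⟩ | ⟨hl, hr⟩⟩ |
    ⟨e, he, ⟨hl, hr⟩ | ⟨hl, hr⟩ | ⟨hl, hr⟩ | ⟨hl, hr⟩⟩ |
    ⟨hb, ⟨hl, hr⟩ | ⟨hl, hr⟩ | ⟨hl, hr⟩⟩ <;> rw [h] at hl <;> simp_all

lemma right_O {k : ℕ} (hk : k < n) {v : V}
    (h : (Tl t σ rot ⟨k, hk⟩).right = (Col.O v, true)) :
    σ ⟨k, hk⟩ = Sum.inl v ∧ (Tl t σ rot ⟨k, hk⟩).left = (Col.I v, true) := by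
  rcases master t σ rot k hk with ⟨w, hw, ⟨hl, hr⟩ | ⟨hl, hr⟩ | ⟨hl, hr⟩⟩ |
    ⟨e, he, ⟨hl, hr⟩ | ⟨hl, hr⟩ | ⟨hl, hr⟩ | ⟨hl, hr⟩⟩ |
    ⟨hb, ⟨hl, hr⟩ | ⟨hl, hr⟩ | ⟨hl, hr⟩⟩ <;> rw [h] at hr <;> simp_all

lemma left_O_false {k : ℕ} (hk : k < n) {v : V}
    (h : (Tl t σ rot ⟨k, hk⟩).left = (Col.O v, false)) :
    (∃ e : {e : V × V // e ∈ E}, σ ⟨k, hk⟩ = Sum.inr (Sum.inl e) ∧ e.1.1 = v ∧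
      (Tl t σ rot ⟨k, hk⟩).right = (Col.I e.1.2, false)) ∨
    (σ ⟨k, hk⟩ = Sum.inr (Sum.inr ()) ∧ v = t ∧
      (Tl t σ rot ⟨k, hk⟩).right = (Col.X, false)) := by
  rcases master t σ rot k hk with ⟨w, hw, ⟨hl, hr⟩ | ⟨hl, hr⟩ | ⟨hl, hr⟩⟩ |
    ⟨e, he, ⟨hl, hr⟩ | ⟨hl, hr⟩ | ⟨hl, hr⟩ | ⟨hl, hr⟩⟩ |
    ⟨hb, ⟨hl, hr⟩ | ⟨hl, hr⟩ | ⟨hl, hr⟩⟩ <;> rw [h] at hl <;> simp_all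

lemma left_X_true {k : ℕ} (hk : k < n)
    (h : (Tl t σ rot ⟨k, hk⟩).left = (Col.X, true)) :
    (∃ e : {e : V × V // e ∈ E}, σ ⟨k, hk⟩ = Sum.inr (Sum.inl e)) ∧
      (Tl t σ rot ⟨k, hk⟩).right = (Col.X, false) := by
  rcases master t σ rot k hk with ⟨w, hw, ⟨hl, hr⟩ | ⟨hl, hr⟩ | ⟨hl, hr⟩⟩ |
    ⟨e, he, ⟨hl, hr⟩ | ⟨hl, hr⟩ | ⟨hl, hr⟩ | ⟨hl, hr⟩⟩ |
    ⟨hb, ⟨hl, hr⟩ | ⟨hl, hr⟩ | ⟨hl, hr⟩⟩ <;> rw [h] at hl <;> simp_all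

lemma right_X_true {k : ℕ} (hk : k < n)
    (h : (Tl t σ rot ⟨k, hk⟩).right = (Col.X, true)) :
    (Tl t σ rot ⟨k, hk⟩).left = (Col.X, false) := by
  rcases master t σ rot k hk with ⟨w, hw, ⟨hl, hr⟩ | ⟨hl, hr⟩ | ⟨hl, hr⟩⟩ |
    ⟨e, he, ⟨hl, hr⟩ | ⟨hl, hr⟩ | ⟨hl, hr⟩ | ⟨hl, hr⟩⟩ |
    ⟨hb, ⟨hl, hr⟩ | ⟨hl, hr⟩ | ⟨hl, hr⟩⟩ <;> rw [h] at hr <;> simp_all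

lemma left_I_false {k : ℕ} (hk : k < n) {v : V}
    (h : (Tl t σ rot ⟨k, hk⟩).left = (Col.I v, false)) :
    ∃ e : {e : V × V // e ∈ E}, σ ⟨k, hk⟩ = Sum.inr (Sum.inl e) ∧ e.1.2 = v := by
  rcases master t σ rot k hk with ⟨w, hw, ⟨hl, hr⟩ | ⟨hl, hr⟩ | ⟨hl, hr⟩⟩ |
    ⟨e, he, ⟨hl, hr⟩ | ⟨hl, hr⟩ | ⟨hl, hr⟩ | ⟨hl, hr⟩⟩ |
    ⟨hb, ⟨hl, hr⟩ | ⟨hl, hr⟩ | ⟨hl, hr⟩⟩ <;> rw [h] at hl <;> simp_all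

lemma right_I_false {k : ℕ} (hk : k < n) {v : V}
    (h : (Tl t σ rot ⟨k, hk⟩).right = (Col.I v, false)) :
    ∃ e : {e : V × V // e ∈ E}, σ ⟨k, hk⟩ = Sum.inr (Sum.inl e) ∧ e.1.2 = v := by
  rcases master t σ rot k hk with ⟨w, hw, ⟨hl, hr⟩ | ⟨hl, hr⟩ | ⟨hl, hr⟩⟩ |
    ⟨e, he, ⟨hl, hr⟩ | ⟨hl, hr⟩ | ⟨hl, hr⟩ | ⟨hl, hr⟩⟩ |
    ⟨hb, ⟨hl, hr⟩ | ⟨hl, hr⟩ | ⟨hl, hr⟩⟩ <;> rw [h] at hr <;> simp_all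

lemma no_right_U {k : ℕ} (hk : k < n) {v : V}
    (h : (Tl t σ rot ⟨k, hk⟩).right = (Col.U v, false)) : False := by
  rcases master t σ rot k hk with ⟨w, hw, ⟨hl, hr⟩ | ⟨hl, hr⟩ | ⟨hl, hr⟩⟩ |
    ⟨e, he, ⟨hl, hr⟩ | ⟨hl, hr⟩ | ⟨hl, hr⟩ | ⟨hl, hr⟩⟩ |
    ⟨hb, ⟨hl, hr⟩ | ⟨hl, hr⟩ | ⟨hl, hr⟩⟩ <;> rw [h] at hr <;> simp_all

lemma no_left_U {k : ℕ} (hk : k < n) {v : V}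
    (h : (Tl t σ rot ⟨k, hk⟩).left = (Col.U v, false)) : False := by
  rcases master t σ rot k hk with ⟨w, hw, ⟨hl, hr⟩ | ⟨hl, hr⟩ | ⟨hl, hr⟩⟩ |
    ⟨e, he, ⟨hl, hr⟩ | ⟨hl, hr⟩ | ⟨hl, hr⟩ | ⟨hl, hr⟩⟩ |
    ⟨hb, ⟨hl, hr⟩ | ⟨hl, hr⟩ | ⟨hl, hr⟩⟩ <;> rw [h] at hl <;> simp_all

lemma no_right_UB {k : ℕ} (hk : k < n)
    (h : (Tl t σ rot ⟨k, hk⟩).right = (Col.UB, false)) : False := by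
  rcases master t σ rot k hk with ⟨w, hw, ⟨hl, hr⟩ | ⟨hl, hr⟩ | ⟨hl, hr⟩⟩ |
    ⟨e, he, ⟨hl, hr⟩ | ⟨hl, hr⟩ | ⟨hl, hr⟩ | ⟨hl, hr⟩⟩ |
    ⟨hb, ⟨hl, hr⟩ | ⟨hl, hr⟩ | ⟨hl, hr⟩⟩ <;> rw [h] at hr <;> simp_all

lemma flip_eq {c : Col V} {b : Bool} {p : Col V × Bool} (h : (c, b) = (p.1, !p.2)) :
    p = (c, !b) := by
  rcases p with ⟨pc, pb⟩
  simp only [Prod.mk.injEq] at h ⊢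
  cases pb <;> cases b <;> simp_all

lemma vdich (hc : ∀ i j : Fin n, (j : ℕ) = (i : ℕ) + 1 →
      compatible (Tl t σ rot i) (Tl t σ rot j))
    {k : ℕ} (hk : k < n) {v : V} (hv : σ ⟨k, hk⟩ = Sum.inl v)
    (hnb : k + 1 < n ∨ 0 < k) :
    ((Tl t σ rot ⟨k, hk⟩).left = (Col.I v, true) ∧
      (Tl t σ rot ⟨k, hk⟩).right = (Col.O v, true)) ∨
    ((Tl t σ rot ⟨k, hk⟩).left = (Col.O v, true) ∧
      (Tl t σ rot ⟨k, hk⟩).right = (Col.I v, true)) := by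
  rcases master t σ rot k hk with ⟨w, hw, hopt⟩ | ⟨e, he, _⟩ | ⟨hb, _⟩
  · obtain rfl : v = w := by simpa using hv.symm.trans hw
    rcases hopt with h | h | ⟨hl, hr⟩
    · exact Or.inl h
    · exact Or.inr h
    · exfalso
      rcases hnb with h1 | h1
      · have hi := iface hc hk h1 rfl
        rw [hr] at hi
        exact no_left_U h1 hi
      · have hi := iface hc (a := k - 1) (b := k) (by omega) hk (by omega)
        rw [hl] at hi
        exact no_right_U (by omega) (flip_eq hi)
  · exact absurd (hv.symm.trans he) (by simp)
  · exact absurd (hv.symm.trans hb) (by simp)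

lemma core [DecidableEq V] {s : V} (hs : ∀ u : V, (u, s) ∉ E)
    (hc : ∀ i j : Fin n, (j : ℕ) = (i : ℕ) + 1 →
      compatible (Tl t σ rot i) (Tl t σ rot j))
    (hn : 0 < n) (h0 : σ ⟨0, hn⟩ = Sum.inl s) :
    ∃ l : List V, l.Nodup ∧ (∀ v : V, v ∈ l) ∧ l.Chain' (fun a b => (a, b) ∈ E) ∧
      l.head? = some s ∧ l.getLast? = some t := by
  classical
  have hp : σ (σ.symm (Sum.inr (Sum.inr ()))) = Sum.inr (Sum.inr ()) := σ.apply_symm_apply _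
  generalize hpdef : σ.symm (Sum.inr (Sum.inr ())) = p at hp
  have hpn : (p : ℕ) < n := p.isLt
  have hp0 : (p : ℕ) ≠ 0 := by
    intro h
    have h1 : p = ⟨0, hn⟩ := Fin.ext h
    rw [h1, h0] at hp
    simp at hp
  -- no tile ever shows (X, true) on its right
  have Xback : ∀ k (hk : k < n), (Tl t σ rot ⟨k, hk⟩).right = (Col.X, true) → False := by
    intro k
    induction k with
    | zero =>
      intro hk h
      rcases master t σ rot 0 hk with ⟨w, hw, ho⟩ | ⟨e, he, _⟩ | ⟨hb, _⟩
      · rcases ho with ⟨_, hr⟩ | ⟨_, hr⟩ | ⟨_, hr⟩ <;> rw [h] at hr <;> simp at hr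
      · exact absurd (h0.symm.trans he) (by simp)
      · exact absurd (h0.symm.trans hb) (by simp)
    | succ k ih =>
      intro hk h
      have hL := right_X_true hk h
      have hi := iface hc (a := k) (b := k + 1) (by omega) hk rfl
      rw [hL] at hi
      exact ih (by omega) (flip_eq hi)
  -- bridge analysis
  have hq_lt : (p : ℕ) - 1 < n := by omega
  have hi_p := iface hc (a := (p : ℕ) - 1) (b := (p : ℕ)) hq_lt p.isLt (by omega)
  rcases master t σ rot (p : ℕ) p.isLt with ⟨w, hw, _⟩ | ⟨e, he, _⟩ | ⟨hbu, hopt⟩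
  · exact absurd (hw.symm.trans hp) (by simp)
  · exact absurd (he.symm.trans hp) (by simp)
  rcases hopt with ⟨hbl, hbr⟩ | ⟨hbl, hbr⟩ | ⟨hbl, hbr⟩
  case inr.inr.inr.inl =>
    rw [hbl] at hi_p
    exact absurd (flip_eq hi_p) (fun h => Xback _ hq_lt h)
  case inr.inr.inr.inr =>
    rw [hbl] at hi_p
    exact absurd (flip_eq hi_p) (fun h => no_right_UB hq_lt h)
  -- main case: bridge in orientation 0
  rw [hbl] at hi_p
  have hRq : (Tl t σ rot ⟨(p : ℕ) - 1, hq_lt⟩).right = (Col.O t, true) := flip_eq hi_p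
  obtain ⟨hqv, hqL⟩ := right_O hq_lt hRq
  -- everything after the bridge is an edge tile
  have Xfwd : ∀ d (h : (p : ℕ) + 1 + d < n),
      (∃ e : {e : V × V // e ∈ E}, σ ⟨(p : ℕ) + 1 + d, h⟩ = Sum.inr (Sum.inl e)) ∧
      (Tl t σ rot ⟨(p : ℕ) + 1 + d, h⟩).right = (Col.X, false) := by
    intro d
    induction d with
    | zero =>
      intro h
      have hi := iface hc (a := (p : ℕ)) (b := (p : ℕ) + 1 + 0) p.isLt h (by omega)
      rw [hbr] at hi
      have hXt : (Tl t σ rot ⟨(p : ℕ) + 1 + 0, h⟩).left = (Col.X, true) := hi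
      exact left_X_true h hXt
    | succ d ih =>
      intro h
      have hprev := ih (by omega)
      have hi := iface hc (a := (p : ℕ) + 1 + d) (b := (p : ℕ) + 1 + (d + 1))
        (by omega) h (by omega)
      rw [hprev.2] at hi
      have hXt : (Tl t σ rot ⟨(p : ℕ) + 1 + (d + 1), h⟩).left = (Col.X, true) := hi
      exact left_X_true h hXt
  -- all vertex tiles sit at positions ≤ p - 1
  have vert_le : ∀ k (hk : k < n) (v : V), σ ⟨k, hk⟩ = Sum.inl v → k ≤ (p : ℕ) - 1 := by
    intro k hk v hv
    by_contra hgt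
    push_neg at hgt
    have hkp : k ≠ (p : ℕ) := by
      intro h
      have h1 : (⟨k, hk⟩ : Fin n) = p := Fin.ext h
      rw [h1, hp] at hv
      simp at hv
    have hge : (p : ℕ) + 1 ≤ k := by omega
    obtain ⟨e, he⟩ := (Xfwd (k - ((p : ℕ) + 1)) (by omega)).1
    have hEq : (⟨(p : ℕ) + 1 + (k - ((p : ℕ) + 1)), by omega⟩ : Fin n) = ⟨k, hk⟩ :=
      Fin.ext (by simp; omega)
    rw [hEq] at he
    exact absurd (hv.symm.trans he) (by simp)
  -- the chain construction
  have key : ∀ m k (hk : k < n) (v : V) (l : List V),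
      n ≤ k + m →
      σ ⟨k, hk⟩ = Sum.inl v →
      (Tl t σ rot ⟨k, hk⟩).left = (Col.I v, true) →
      l ≠ [] → l.head? = some s → l.getLast? = some v → l.Nodup →
      l.Chain' (fun a b => (a, b) ∈ E) →
      (∀ u ∈ l, ∃ j, ∃ hj : j < n, j ≤ k ∧ σ ⟨j, hj⟩ = Sum.inl u) →
      (∀ j (hj : j < n), j ≤ k →
        (∃ u ∈ l, σ ⟨j, hj⟩ = Sum.inl u) ∨
        ∃ e : {e : V × V // e ∈ E}, σ ⟨j, hj⟩ = Sum.inr (Sum.inl e)) →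
      ∃ l' : List V, l'.Nodup ∧ (∀ v : V, v ∈ l') ∧
        l'.Chain' (fun a b => (a, b) ∈ E) ∧ l'.head? = some s ∧ l'.getLast? = some t := by
    intro m
    induction m with
    | zero =>
      intro k hk v l hm
      exact absurd hm (by omega)
    | succ m ih =>
      intro k hk v l hm hv hL hne hhead hlast hnd hch hMem hCov
      by_cases hvt : v = t
      · subst hvt
        have hkq : k = (p : ℕ) - 1 := by
          have h1 : (⟨k, hk⟩ : Fin n) = ⟨(p : ℕ) - 1, hq_lt⟩ :=
            σ.injective (hv.trans hqv.symm)
          exact congrArg Fin.val h1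
        refine ⟨l, hnd, ?_, hch, hhead, hlast⟩
        intro u
        have hju : σ (σ.symm (Sum.inl u)) = Sum.inl u := σ.apply_symm_apply _
        have hle : ((σ.symm (Sum.inl u) : Fin n) : ℕ) ≤ (p : ℕ) - 1 :=
          vert_le _ (σ.symm (Sum.inl u)).isLt u hju
        rcases hCov _ (σ.symm (Sum.inl u)).isLt (by omega) with ⟨u', hu', hσ⟩ | ⟨e, hσ⟩
        · obtain rfl : u = u' := by simpa using hju.symm.trans hσ
          exact hu'
        · exact absurd (hju.symm.trans hσ) (by simp)
      · -- take a step to the right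
        have hR := (left_I hk hL).2
        have hkleq : k ≤ (p : ℕ) - 1 := vert_le k hk v hv
        have hkq : k ≠ (p : ℕ) - 1 := by
          intro h
          have h1 : (⟨k, hk⟩ : Fin n) = ⟨(p : ℕ) - 1, hq_lt⟩ := Fin.ext h
          rw [h1, hqv] at hv
          exact hvt (by simpa using hv.symm)
        have hk1 : k + 1 < n := by omega
        have hk2 : k + 2 < n := by omega
        have hi1 := iface hc (a := k) (b := k + 1) hk hk1 rfl
        rw [hR] at hi1
        have hL1 : (Tl t σ rot ⟨k + 1, hk1⟩).left = (Col.O v, false) := hi1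
        rcases left_O_false hk1 hL1 with ⟨e, he, he1, hR1⟩ | ⟨_, hvt', _⟩
        swap
        · exact absurd hvt' hvt
        have hi2 := iface hc (a := k + 1) (b := k + 2) hk1 hk2 rfl
        rw [hR1] at hi2
        have hL2 : (Tl t σ rot ⟨k + 2, hk2⟩).left = (Col.I e.1.2, true) := hi2
        obtain ⟨hv2, -⟩ := left_I hk2 hL2
        have hEw : (v, e.1.2) ∈ E := by
          have h2 : (v, e.1.2) = e.1 := by rw [← he1]
          exact h2 ▸ e.2
        have hwl : e.1.2 ∉ l := by
          intro hwin
          obtain ⟨j, hj, hjk, hσj⟩ := hMem _ hwin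
          have h1 : (⟨j, hj⟩ : Fin n) = ⟨k + 2, hk2⟩ := σ.injective (hσj.trans hv2.symm)
          have h2 : j = k + 2 := congrArg Fin.val h1
          omega
        refine ih (k + 2) hk2 e.1.2 (l ++ [e.1.2]) (by omega) hv2 hL2 (by simp)
          ?_ ?_ ?_ ?_ ?_ ?_
        · cases l with
          | nil => exact absurd rfl hne
          | cons a l' => simpa using hhead
        · simp [List.getLast?_concat]
        · rw [List.nodup_append]
          exact ⟨hnd, List.nodup_singleton _, by intro a ha b hb hab; rw [List.mem_singleton] at hb; subst hb; subst hab; exact hwl ha⟩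
        · refine List.IsChain.append hch (List.isChain_singleton _) ?_
          intro x hx y hy
          rw [hlast] at hx
          obtain rfl : x = v := by simpa using hx.symm
          obtain rfl : y = e.1.2 := by simpa using hy.symm
          exact hEw
        · intro u hu
          rcases List.mem_append.mp hu with hu | hu
          · obtain ⟨j, hj, hjk, hσ⟩ := hMem u hu
            exact ⟨j, hj, by omega, hσ⟩
          · obtain rfl : u = e.1.2 := by simpa using hu
            exact ⟨k + 2, hk2, le_refl _, hv2⟩
        · intro j hj hjle
          rcases Nat.lt_or_ge j (k + 1) with hlt | hge
          · rcases hCov j hj (by omega) with ⟨u, hu, hσ⟩ | he'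
            · exact Or.inl ⟨u, List.mem_append_left _ hu, hσ⟩
            · exact Or.inr he'
          · rcases Nat.eq_or_lt_of_le hge with heq | hlt2
            · right
              refine ⟨e, ?_⟩
              rw [show (⟨j, hj⟩ : Fin n) = ⟨k + 1, hk1⟩ from Fin.ext heq.symm]
              exact he
            · left
              have hjk2 : j = k + 2 := by omega
              exact ⟨e.1.2, by simp,
                by rw [show (⟨j, hj⟩ : Fin n) = ⟨k + 2, hk2⟩ from Fin.ext hjk2]; exact hv2⟩
  -- launch the chain at position 0
  have hn2 : 1 < n := by omega
  have hL0 : (Tl t σ rot ⟨0, hn⟩).left = (Col.I s, true) := by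
    rcases vdich hc hn h0 (Or.inl (by omega)) with ⟨h1, -⟩ | ⟨h1, h2⟩
    · exact h1
    · exfalso
      have hi := iface hc (a := 0) (b := 1) hn hn2 rfl
      rw [h2] at hi
      have hX : (Tl t σ rot ⟨1, hn2⟩).left = (Col.I s, false) := hi
      obtain ⟨e, -, he2⟩ := left_I_false hn2 hX
      refine hs e.1.1 ?_
      have h3 : (e.1.1, s) = e.1 := by rw [← he2]
      exact h3 ▸ e.2
  exact key n 0 hn s [s] (by omega) h0 hL0 (by simp) rfl rfl (List.nodup_singleton _)
    (List.isChain_singleton _)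
    (by intro u hu
        have hus : u = s := by simpa using hu
        subst hus
        exact ⟨0, hn, le_refl _, h0⟩)
    (by intro j hj hj0
        obtain rfl : j = 0 := by omega
        exact Or.inl ⟨s, by simp, h0⟩)

lemma compat_rot2 {W : Type} {a b : STile W} (h : compatible a b) :
    compatible (rotCW^[2] b) (rotCW^[2] a) := by
  obtain ⟨h1, h2⟩ := h
  refine ⟨?_, ?_⟩
  · show b.left.1 = a.right.1
    exact h1.symm
  · show b.left.2 = !a.right.2
    rw [h2, Bool.not_not]
end S15


/-- Conversely: if all `n = |V| + |E| + 1` tiles of the signed edge-matching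
instance constructed from a directed graph `G = (V, E)` with unique source `s` and
unique sink `t` can be placed (with rotations) in a `1 × n` row with every adjacent
pair compatible, then `G` has a Hamiltonian path from `s` to `t`. -/
theorem stmt15 {V : Type} [Fintype V] [DecidableEq V] (E : Finset (V × V)) (s t : V)
    (hs : ∀ u : V, (u, s) ∉ E) (ht : ∀ w : V, (t, w) ∉ E)
    (hsu : ∀ v : V, (∀ u : V, (u, v) ∉ E) → v = s)
    (htu : ∀ v : V, (∀ w : V, (v, w) ∉ E) → v = t)
    (hplace : ∃ (σ : Fin (Fintype.card V + E.card + 1) ≃ (V ⊕ {e : V × V // e ∈ E} ⊕ Unit))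
      (rot : Fin (Fintype.card V + E.card + 1) → ℕ),
      ∀ i j : Fin (Fintype.card V + E.card + 1), (j : ℕ) = (i : ℕ) + 1 →
        compatible (rotCW^[rot i] (baseTile E t (σ i)))
          (rotCW^[rot j] (baseTile E t (σ j)))) :
    ∃ l : List V, l.Nodup ∧ (∀ v : V, v ∈ l) ∧
      l.Chain' (fun a b => (a, b) ∈ E) ∧ l.head? = some s ∧ l.getLast? = some t := by
  classical
  obtain ⟨σ, rot, hcomp⟩ := hplace
  have hc : ∀ i j : Fin (Fintype.card V + E.card + 1), (j : ℕ) = (i : ℕ) + 1 →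
      compatible (S15.Tl t σ rot i) (S15.Tl t σ rot j) := hcomp
  have hn : 0 < Fintype.card V + E.card + 1 := by omega
  have hcV : 0 < Fintype.card V := Fintype.card_pos_iff.mpr ⟨s⟩
  have hn2 : 1 < Fintype.card V + E.card + 1 := by omega
  have hps : σ (σ.symm (Sum.inl s)) = Sum.inl s := σ.apply_symm_apply _
  rcases S15.vdich hc (σ.symm (Sum.inl s)).isLt hps
      (by have := (σ.symm (Sum.inl s)).isLt; omega) with ⟨hL, hR⟩ | ⟨hL, hR⟩
  · -- s forward: it must be at position 0
    have hps0 : ((σ.symm (Sum.inl s) : Fin _) : ℕ) = 0 := by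
      by_contra h
      have hlt : ((σ.symm (Sum.inl s) : Fin _) : ℕ) - 1 < Fintype.card V + E.card + 1 := by
        have := (σ.symm (Sum.inl s)).isLt; omega
      have hi := S15.iface hc (a := ((σ.symm (Sum.inl s) : Fin _) : ℕ) - 1)
        (b := ((σ.symm (Sum.inl s) : Fin _) : ℕ)) hlt (σ.symm (Sum.inl s)).isLt (by omega)
      rw [hL] at hi
      have hRr := S15.flip_eq hi
      obtain ⟨e, -, he2⟩ := S15.right_I_false hlt hRr
      refine hs e.1.1 ?_
      have h3 : (e.1.1, s) = e.1 := by rw [← he2]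
      exact h3 ▸ e.2
    refine S15.core hs hc hn ?_
    rw [show (⟨0, hn⟩ : Fin (Fintype.card V + E.card + 1)) = σ.symm (Sum.inl s) from
      (Fin.ext hps0).symm]
    exact hps
  · -- s backward: it must be at the right end; reverse the row
    have hpsN : ((σ.symm (Sum.inl s) : Fin _) : ℕ) = Fintype.card V + E.card := by
      by_contra h
      have h1 : ((σ.symm (Sum.inl s) : Fin _) : ℕ) + 1 < Fintype.card V + E.card + 1 := by
        have := (σ.symm (Sum.inl s)).isLt; omega
      have hi := S15.iface hc (a := ((σ.symm (Sum.inl s) : Fin _) : ℕ))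
        (b := ((σ.symm (Sum.inl s) : Fin _) : ℕ) + 1) (σ.symm (Sum.inl s)).isLt h1 rfl
      rw [hR] at hi
      have hX : (S15.Tl t σ rot ⟨((σ.symm (Sum.inl s) : Fin _) : ℕ) + 1, h1⟩).left
          = (Col.I s, false) := hi
      obtain ⟨e, -, he2⟩ := S15.left_I_false h1 hX
      refine hs e.1.1 ?_
      have h3 : (e.1.1, s) = e.1 := by rw [← he2]
      exact h3 ▸ e.2
    set σ' : Fin (Fintype.card V + E.card + 1) ≃ (V ⊕ {e : V × V // e ∈ E} ⊕ Unit) :=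
      Fin.revPerm.trans σ with hσdef
    set rot' : Fin (Fintype.card V + E.card + 1) → ℕ := fun i => 2 + rot i.rev with hrotdef
    have hσ' : ∀ i, σ' i = σ i.rev := fun i => by simp [hσdef]
    have hTl : ∀ i, S15.Tl t σ' rot' i = rotCW^[2] (S15.Tl t σ rot i.rev) := by
      intro i
      show rotCW^[rot' i] (baseTile E t (σ' i)) = _
      rw [hσ' i]
      show rotCW^[2 + rot i.rev] (baseTile E t (σ i.rev))
        = rotCW^[2] (rotCW^[rot i.rev] (baseTile E t (σ i.rev)))
      rw [Function.iterate_add_apply]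
    have hc' : ∀ i j : Fin (Fintype.card V + E.card + 1), (j : ℕ) = (i : ℕ) + 1 →
        compatible (S15.Tl t σ' rot' i) (S15.Tl t σ' rot' j) := by
      intro i j hij
      have h1 : ((i.rev : Fin _) : ℕ) = ((j.rev : Fin _) : ℕ) + 1 := by
        rw [Fin.val_rev, Fin.val_rev]
        have := i.isLt; have := j.isLt; omega
      have hcc := hc j.rev i.rev h1
      rw [hTl i, hTl j]
      exact S15.compat_rot2 hcc
    have h0' : σ' ⟨0, hn⟩ = Sum.inl s := by
      rw [hσ' ⟨0, hn⟩]
      have hrev : (⟨0, hn⟩ : Fin (Fintype.card V + E.card + 1)).rev = σ.symm (Sum.inl s) :=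
        Fin.ext (by
          rw [Fin.val_rev]
          show Fintype.card V + E.card + 1 - (0 + 1) = _
          omega)
      rw [hrev]
      exact hps
    exact S15.core hs hc' hn h0'
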